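/- Let S = ⟨b, b + t m_1, …, b + t m_n⟩ be a numerical semigroup, where b, t ∈ ℤ^+ and m_i = ∏_{j ≠ i, 1≤j≤n} c_j, with c_1 > c_2 > ⋯ > c_n ≥ 2 pairwise relatively prime integers. Then L_S = c_{n−1} (b + t m_{n−1}) + S. -/

import Mathlib

/-- The `S`-degree of an exponent vector. -/
def degS {n : ℕ} {G : Type*} [AddCommMonoid G] (a : Fin n → G) (lam : Fin n → ℕ) : G :=
  ∑ i, lam i • a i

/-- The set of elements of `S = ⟨a_1,…,a_k⟩` having at least two different factorizations
of the same length. -/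
def LSet {n : ℕ} {G : Type*} [AddCommMonoid G] (a : Fin n → G) : Set G :=
  {x | ∃ lam nu : Fin n → ℕ, lam ≠ nu ∧ degS a lam = x ∧ degS a nu = x ∧
    ∑ i, lam i = ∑ i, nu i}

lemma degS_add {k : ℕ} (A l m' : Fin k → ℕ) : degS A (l + m') = degS A l + degS A m' := by
  simp [degS, add_smul, add_mul, Finset.sum_add_distrib]

lemma degS_single {k : ℕ} (A : Fin k → ℕ) (i : Fin k) (c : ℕ) :
    degS A (Pi.single i c) = c * A i := by
  simp [degS, Pi.single_apply]

lemma degS_mem_closure {k : ℕ} (A : Fin k → ℕ) (lam : Fin k → ℕ) :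
    degS A lam ∈ AddSubmonoid.closure (Set.range A) :=
  AddSubmonoid.sum_mem _ fun i _ =>
    nsmul_mem (AddSubmonoid.subset_closure (Set.mem_range_self i)) _

set_option maxHeartbeats 1000000 in
/-- **Corollary.** Let `S = ⟨b, b + t m_1, …, b + t m_n⟩` be a numerical semigroup with
`b, t ∈ ℤ⁺` and `m_i = ∏_{j ≠ i} c_j`, where `c_1 > ⋯ > c_n ≥ 2` are pairwise relatively
prime integers.  Then `L_S = c_{n-1} (b + t m_{n-1}) + S`. -/
theorem LSet_shifted_unique_Betti
    {n : ℕ} (hn : 2 ≤ n)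
    (b t : ℕ) (hb : 0 < b) (ht : 0 < t)
    (cs m : Fin n → ℕ)
    (hm : ∀ i, m i = ∏ j ∈ Finset.univ.erase i, cs j)
    -- `c_1 > c_2 > ⋯ > c_n`:
    (hanti : ∀ i j : Fin n, i < j → cs j < cs i)
    -- `c_n ≥ 2`:
    (h2 : 2 ≤ cs ⟨n - 1, by omega⟩)
    -- pairwise relatively prime:
    (hcs : ∀ i j, i ≠ j → Nat.Coprime (cs i) (cs j))
    -- the generating family `A = (b, b + t m_1, …, b + t m_n)`:
    (A : Fin (n + 1) → ℕ) (hA : A = Fin.cons b (fun i => b + t * m i))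
    -- `S = ⟨A⟩` is a numerical semigroup:
    (hfin : {x : ℕ | x ∉ AddSubmonoid.closure (Set.range A)}.Finite) :
    LSet A = {x | ∃ y ∈ AddSubmonoid.closure (Set.range A),
      x = cs ⟨n - 2, by omega⟩ * (b + t * m ⟨n - 2, by omega⟩) + y} := by
  have hn1 : n - 1 < n := by omega
  have hn2 : n - 2 < n := by omega
  set p : Fin n := ⟨n - 2, hn2⟩ with hpdef
  set q : Fin n := ⟨n - 1, hn1⟩ with hqdef
  have hpq : p < q := by simp only [Fin.lt_def, hpdef, hqdef]; omega
  have hqp : cs q < cs p := hanti p q hpq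
  have hcq2 : 2 ≤ cs q := h2
  have hcpos : ∀ i, 2 ≤ cs i := by
    intro i
    rcases lt_or_eq_of_le (show i ≤ q from by simp [Fin.le_def, hqdef]; omega) with hlt | heq
    · exact le_of_lt (lt_of_le_of_lt hcq2 (hanti i q hlt))
    · rw [heq]; exact hcq2
  have hM : ∀ i, cs i * m i = ∏ j, cs j := fun i => by
    rw [hm]; exact Finset.mul_prod_erase _ _ (Finset.mem_univ i)
  have hMpos : 0 < ∏ j, cs j := Finset.prod_pos fun i _ => by have := hcpos i; omega
  have hApsucc : ∀ i : Fin n, A i.succ = b + t * m i := fun i => by rw [hA]; simp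
  have hA0 : A 0 = b := by rw [hA]; simp
  -- closure membership gives a factorization
  have hclos : ∀ y ∈ AddSubmonoid.closure (Set.range A), ∃ μ, degS A μ = y := by
    intro y hy
    induction hy using AddSubmonoid.closure_induction with
    | mem z hz =>
      obtain ⟨i, rfl⟩ := hz
      exact ⟨Pi.single i 1, by simp [degS_single]⟩
    | zero => exact ⟨0, by simp [degS]⟩
    | add a b _ _ ha hb =>
      obtain ⟨la, hla⟩ := ha
      obtain ⟨lb, hlb⟩ := hb
      exact ⟨la + lb, by rw [degS_add, hla, hlb]⟩
  -- key step: a factorization with a big coordinate gives membership in the shifted monoid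
  have key : ∀ (μ : Fin (n+1) → ℕ) (k : Fin n), cs p ≤ cs k → cs k ≤ μ k.succ →
      ∃ y ∈ AddSubmonoid.closure (Set.range A),
        degS A μ = cs p * (b + t * m p) + y := by
    intro μ k hpk hkμ
    set μ' : Fin (n+1) → ℕ := Function.update μ k.succ (μ k.succ - cs k) with hμ'
    have hdecomp : μ = Pi.single k.succ (cs k) + μ' := by
      funext j
      by_cases hj : j = k.succ
      · subst hj; simp [hμ', Pi.single_apply]; omega
      · simp [hμ', Function.update_of_ne hj, Pi.single_apply, hj]
    refine ⟨(cs k - cs p) * b + degS A μ', ?_, ?_⟩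
    · refine AddSubmonoid.add_mem _ ?_ (degS_mem_closure A μ')
      have hbmem : b ∈ AddSubmonoid.closure (Set.range A) :=
        AddSubmonoid.subset_closure ⟨0, hA0⟩
      simpa [smul_eq_mul] using nsmul_mem hbmem (cs k - cs p)
    · conv_lhs => rw [hdecomp]
      rw [degS_add, degS_single, hApsucc]
      have h1 : ((cs p : ℤ)) * m p = (cs k : ℤ) * m k := by exact_mod_cast (hM p).trans (hM k).symm
      zify [hpk]
      linear_combination -(t : ℤ) * h1
  ext x
  simp only [LSet, Set.mem_setOf_eq]
  constructor
  · rintro ⟨lam, nu, hne, hdl, hdn, hlen⟩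
    set d : Fin n → ℤ := fun i => (lam i.succ : ℤ) - nu i.succ with hddef
    -- the two equations
    have hval : ∑ i : Fin (n+1), ((lam i : ℤ) - nu i) * A i = 0 := by
      have h1 : ((degS A lam : ℕ) : ℤ) = ((degS A nu : ℕ) : ℤ) := by
        rw [hdl, hdn]
      simp only [degS, smul_eq_mul] at h1
      push_cast at h1
      simp [sub_mul, Finset.sum_sub_distrib, sub_eq_zero, h1]
    have hlen' : ((lam 0 : ℤ) - nu 0) + ∑ i : Fin n, d i = 0 := by
      have h1 : ((∑ i, lam i : ℕ) : ℤ) = ((∑ i, nu i : ℕ) : ℤ) := by exact_mod_cast hlen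
      push_cast at h1
      rw [Fin.sum_univ_succ (f := fun i => (lam i : ℤ))] at h1
      rw [Fin.sum_univ_succ (f := fun i => (nu i : ℤ))] at h1
      simp only [hddef, Finset.sum_sub_distrib]
      linarith
    have key1 : ∑ i : Fin n, d i * (m i : ℤ) = 0 := by
      rw [Fin.sum_univ_succ] at hval
      have h2 : ∑ i : Fin n, ((lam i.succ : ℤ) - nu i.succ) * A i.succ
          = (b : ℤ) * (∑ i : Fin n, d i) + t * ∑ i : Fin n, d i * m i := by
        rw [Finset.mul_sum, Finset.mul_sum, ← Finset.sum_add_distrib]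
        refine Finset.sum_congr rfl fun i _ => ?_
        rw [hApsucc i]
        push_cast
        simp only [hddef]
        ring
      rw [h2, hA0] at hval
      have ht' : (t : ℤ) ≠ 0 := by exact_mod_cast ht.ne'
      have hS : ∑ i : Fin n, d i = -((lam 0 : ℤ) - nu 0) := by linarith
      rw [hS] at hval
      have h3 : (t : ℤ) * ∑ i : Fin n, d i * (m i : ℤ) = 0 := by linarith
      rcases mul_eq_zero.mp h3 with h | h
      · exact absurd h ht'
      · exact h
    -- divisibility
    have hdvd : ∀ k : Fin n, (cs k : ℤ) ∣ d k := by
      intro k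
      have h1 : ∀ i ∈ Finset.univ.erase k, (cs k : ℤ) ∣ d i * m i := by
        intro i hi
        have hik : i ≠ k := Finset.ne_of_mem_erase hi
        have : cs k ∣ m i := by
          rw [hm]
          exact Finset.dvd_prod_of_mem _ (Finset.mem_erase.mpr ⟨hik.symm, Finset.mem_univ _⟩)
        exact Dvd.dvd.mul_left (Int.natCast_dvd_natCast.mpr this) _
      have h2' : (cs k : ℤ) ∣ d k * m k := by
        have hsum := Finset.dvd_sum h1
        have heq : d k * (m k : ℤ) = - ∑ i ∈ Finset.univ.erase k, d i * (m i : ℤ) := by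
          have h3 := Finset.add_sum_erase Finset.univ (fun i => d i * (m i : ℤ))
            (Finset.mem_univ k)
          rw [key1] at h3
          beta_reduce at h3
          linarith
        rw [heq]
        exact dvd_neg.mpr hsum
      have hco : Nat.Coprime (cs k) (m k) := by
        rw [hm]
        exact Nat.Coprime.prod_right fun j hj => hcs k j (Finset.ne_of_mem_erase hj).symm
      have h4 : cs k ∣ (d k).natAbs * m k := by
        have h5 : cs k ∣ (d k * (m k : ℤ)).natAbs :=
          Int.natCast_dvd_natCast.mp (Int.dvd_natAbs.mpr h2')
        rwa [Int.natAbs_mul, Int.natAbs_natCast] at h5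
      exact Int.dvd_natAbs.mp (Int.natCast_dvd_natCast.mpr (hco.dvd_of_dvd_mul_right h4))
    choose e he using hdvd
    have hesum : ∑ k, e k = 0 := by
      have h1 : (∑ k, e k) * ((∏ j, cs j : ℕ) : ℤ) = 0 := by
        rw [Finset.sum_mul, ← key1]
        refine Finset.sum_congr rfl fun k _ => ?_
        have h2 : ((cs k : ℤ)) * m k = ∏ i, (cs i : ℤ) := by exact_mod_cast hM k
        rw [he k]
        push_cast
        linear_combination (-(e k)) * h2
      have hMz : ((∏ j, cs j : ℕ) : ℤ) ≠ 0 := by exact_mod_cast hMpos.ne'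
      rcases mul_eq_zero.mp h1 with h | h
      · exact h
      · exact absurd h hMz
    -- e is nonzero
    have hene : ∃ k, e k ≠ 0 := by
      by_contra h
      push_neg at h
      apply hne
      have hd0 : ∀ i : Fin n, lam i.succ = nu i.succ := by
        intro i
        have h5 := he i
        rw [h i, mul_zero] at h5
        simp only [hddef, sub_eq_zero] at h5
        exact_mod_cast h5
      have hsum0 : ∑ i : Fin n, d i = 0 := by
        apply Finset.sum_eq_zero
        intro i _
        have h5 := he i
        rw [h i, mul_zero] at h5
        exact h5
      have h0 : lam 0 = nu 0 := by
        rw [hsum0] at hlen'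
        have : (lam 0 : ℤ) = nu 0 := by linarith
        exact_mod_cast this
      funext j
      refine Fin.cases ?_ ?_ j
      · exact h0
      · exact hd0
    have hpos : ∃ i, 0 < e i := by
      by_contra h
      push_neg at h
      obtain ⟨k0, hk0⟩ := hene
      exact hk0 ((Finset.sum_eq_zero_iff_of_nonpos fun i _ => h i).mp hesum k0
        (Finset.mem_univ k0))
    have hneg : ∃ j, e j < 0 := by
      by_contra h
      push_neg at h
      obtain ⟨k0, hk0⟩ := hene
      exact hk0 ((Finset.sum_eq_zero_iff_of_nonneg fun i _ => h i).mp hesum k0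
        (Finset.mem_univ k0))
    obtain ⟨i, hi⟩ := hpos
    obtain ⟨j, hj⟩ := hneg
    have hij : i ≠ j := fun h => by rw [h] at hi; linarith
    have hple : ∀ k : Fin n, k ≠ q → cs p ≤ cs k := by
      intro k hk
      have hkv : k.val ≤ n - 2 := by
        have h1 := k.isLt
        have h2 : k.val ≠ n - 1 := fun hh => hk (Fin.ext hh)
        omega
      rcases lt_or_eq_of_le (show k ≤ p from by simpa [Fin.le_def, hpdef] using hkv)
        with hlt | heq
      · exact le_of_lt (hanti k p hlt)
      · rw [heq]
    by_cases hiq : i = q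
    · -- use nu and j
      have hjq : j ≠ q := fun h => hij (hiq.trans h.symm)
      have hnu_ge : cs j ≤ nu j.succ := by
        have h5 := he j
        simp only [hddef] at h5
        have hnn : (0 : ℤ) ≤ lam j.succ := by positivity
        have hcn : (0 : ℤ) ≤ cs j := by positivity
        have h6 : (cs j : ℤ) * 1 ≤ (cs j : ℤ) * (-e j) := by
          apply mul_le_mul_of_nonneg_left _ hcn
          omega
        have h7 : (cs j : ℤ) ≤ nu j.succ := by nlinarith
        exact_mod_cast h7
      obtain ⟨y, hy, hxy⟩ := key nu j (hple j hjq) hnu_ge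
      exact ⟨y, hy, by rw [← hdn]; exact hxy⟩
    · have hlam_ge : cs i ≤ lam i.succ := by
        have h5 := he i
        simp only [hddef] at h5
        have hnn : (0 : ℤ) ≤ nu i.succ := by positivity
        have hcn : (0 : ℤ) ≤ cs i := by positivity
        have h6 : (cs i : ℤ) * 1 ≤ (cs i : ℤ) * e i := by
          apply mul_le_mul_of_nonneg_left _ hcn
          omega
        have h7 : (cs i : ℤ) ≤ lam i.succ := by nlinarith
        exact_mod_cast h7
      obtain ⟨y, hy, hxy⟩ := key lam i (hple i hiq) hlam_ge
      exact ⟨y, hy, by rw [← hdl]; exact hxy⟩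
  · rintro ⟨y, hy, rfl⟩
    obtain ⟨μ, hμ⟩ := hclos y hy
    refine ⟨μ + Pi.single p.succ (cs p),
            μ + (Pi.single (0 : Fin (n+1)) (cs p - cs q) + Pi.single q.succ (cs q)),
            ?_, ?_, ?_, ?_⟩
    · intro h
      have h1 := congrFun h p.succ
      have hps0 : p.succ ≠ (0 : Fin (n+1)) := Fin.succ_ne_zero p
      have hpsq : p.succ ≠ q.succ := by
        simp only [Ne, Fin.succ_inj]
        intro hh
        rw [hh] at hpq
        exact lt_irrefl _ hpq
      rw [Pi.add_apply, Pi.add_apply, Pi.add_apply, Pi.single_apply, Pi.single_apply,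
        Pi.single_apply, if_pos rfl, if_neg hps0, if_neg hpsq] at h1
      have := hcpos p
      omega
    · rw [degS_add, degS_single, hApsucc, hμ]
      have h1 : cs p * (b + t * m p) + y = cs p * (b + t * m p) + y := rfl
      exact (by ring : y + cs p * (b + t * m p) = cs p * (b + t * m p) + y)
    · rw [degS_add, degS_add, degS_single, degS_single, hApsucc, hA0, hμ]
      have h1 : ((cs p : ℤ)) * m p = (cs q : ℤ) * m q := by exact_mod_cast (hM p).trans (hM q).symm
      zify [le_of_lt hqp]
      linear_combination -(t : ℤ) * h1
    · simp only [Pi.add_apply, Finset.sum_add_distrib, Pi.single_apply]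
      rw [Finset.sum_ite_eq' Finset.univ p.succ, Finset.sum_ite_eq' Finset.univ (0 : Fin (n+1)),
        Finset.sum_ite_eq' Finset.univ q.succ]
      simp only [Finset.mem_univ, if_pos]
      omega
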